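/- The map ξ : ℂ* → ℂ² given by ξ(t) = ((t−1)²(t+2)/t, (t−1)²(t+1/2)/t²) is injective, and its derivative ξ'(t) vanishes at exactly three points of ℂ*, each a simple (A₂-type) cusp where both coordinate functions have a critical point of order exactly 2. -/

import Mathlib

open Complex

/-- The first coordinate of the Rudolph curve, case (w). -/
noncomputable def rudolphPhi : ℂ → ℂ := fun t => (t - 1) ^ 2 * (t + 2) / t

/-- The second coordinate of the Rudolph curve, case (w). -/
noncomputable def rudolphPsi : ℂ → ℂ := fun t => (t - 1) ^ 2 * (t + 1 / 2) / t ^ 2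

lemma hasDerivAt_rudolphPhi {t : ℂ} (ht : t ≠ 0) :
    HasDerivAt rudolphPhi (2 * (t ^ 3 - 1) / t ^ 2) t := by
  have hnum : HasDerivAt (fun x : ℂ => (x - 1) ^ 2 * (x + 2))
      (2 * (t - 1) * (t + 2) + (t - 1) ^ 2) t := by
    have h1 : HasDerivAt (fun x : ℂ => (x - 1) ^ 2) (2 * (t - 1)) t := by
      have := ((hasDerivAt_id t).sub_const 1).fun_pow 2
      simpa using this
    have h2 : HasDerivAt (fun x : ℂ => x + 2) 1 t := (hasDerivAt_id t).add_const 2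
    simpa [mul_comm, mul_assoc] using h1.fun_mul h2
  have hden : HasDerivAt (fun x : ℂ => x) 1 t := hasDerivAt_id t
  have := hnum.fun_div hden ht
  refine this.congr_deriv ?_
  field_simp
  ring

lemma hasDerivAt_rudolphPsi {t : ℂ} (ht : t ≠ 0) :
    HasDerivAt rudolphPsi ((t ^ 3 - 1) / t ^ 3) t := by
  have hnum : HasDerivAt (fun x : ℂ => (x - 1) ^ 2 * (x + 1 / 2))
      (2 * (t - 1) * (t + 1 / 2) + (t - 1) ^ 2) t := by
    have h1 : HasDerivAt (fun x : ℂ => (x - 1) ^ 2) (2 * (t - 1)) t := by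
      have := ((hasDerivAt_id t).sub_const 1).fun_pow 2
      simpa using this
    have h2 : HasDerivAt (fun x : ℂ => x + 1 / 2) 1 t := (hasDerivAt_id t).add_const _
    simpa [mul_comm, mul_assoc] using h1.fun_mul h2
  have hden : HasDerivAt (fun x : ℂ => x ^ 2) (2 * t) t := by
    simpa using (hasDerivAt_id t).fun_pow 2
  have := hnum.fun_div hden (pow_ne_zero 2 ht)
  refine this.congr_deriv ?_
  field_simp
  ring

lemma deriv_rudolphPhi {t : ℂ} (ht : t ≠ 0) :
    deriv rudolphPhi t = 2 * (t ^ 3 - 1) / t ^ 2 := (hasDerivAt_rudolphPhi ht).deriv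

lemma deriv_rudolphPsi {t : ℂ} (ht : t ≠ 0) :
    deriv rudolphPsi t = (t ^ 3 - 1) / t ^ 3 := (hasDerivAt_rudolphPsi ht).deriv

lemma iteratedDeriv_two_rudolphPhi {t : ℂ} (ht : t ≠ 0) :
    iteratedDeriv 2 rudolphPhi t = (2 * t ^ 3 + 4) / t ^ 3 := by
  rw [iteratedDeriv_succ, iteratedDeriv_one]
  have heq : deriv rudolphPhi =ᶠ[nhds t] fun x => 2 * (x ^ 3 - 1) / x ^ 2 := by
    filter_upwards [isOpen_compl_singleton.eventually_mem (show t ∈ ({0}ᶜ : Set ℂ) from ht)]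
      with x hx
    exact deriv_rudolphPhi hx
  rw [heq.deriv_eq]
  have hg : HasDerivAt (fun x : ℂ => 2 * (x ^ 3 - 1) / x ^ 2) ((2 * t ^ 3 + 4) / t ^ 3) t := by
    have hnum : HasDerivAt (fun x : ℂ => 2 * (x ^ 3 - 1)) (2 * (3 * t ^ 2)) t := by
      have := ((hasDerivAt_pow 3 t).sub_const 1).const_mul 2
      simpa using this
    have hden : HasDerivAt (fun x : ℂ => x ^ 2) (2 * t) t := by
      simpa using (hasDerivAt_id t).fun_pow 2
    have := hnum.fun_div hden (pow_ne_zero 2 ht)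
    refine this.congr_deriv ?_
    field_simp
    ring
  exact hg.deriv

/-- The Rudolph curve `ξ(t) = ((t−1)²(t+2)/t, (t−1)²(t+1/2)/t²)` is
injective on `ℂ*` and has exactly three singular points in `ℂ*`, each a simple
(A₂-type) cusp: both derivatives vanish there but the second derivative of the first
coordinate does not. -/
theorem rudolph_curve_injective_three_cusps :
    Set.InjOn (fun t : ℂ => (rudolphPhi t, rudolphPsi t)) {t : ℂ | t ≠ 0} ∧
    ∃ S : Finset ℂ, S.card = 3 ∧
      (∀ t ∈ S, t ≠ 0 ∧ deriv rudolphPhi t = 0 ∧ deriv rudolphPsi t = 0 ∧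
        iteratedDeriv 2 rudolphPhi t ≠ 0) ∧
      (∀ t : ℂ, t ≠ 0 → deriv rudolphPhi t = 0 → deriv rudolphPsi t = 0 → t ∈ S) := by
  constructor
  · rintro s (hs : s ≠ 0) t (ht : t ≠ 0) h
    simp only [Prod.mk.injEq, rudolphPhi, rudolphPsi] at h
    obtain ⟨h1, h2⟩ := h
    field_simp at h1 h2
    by_cases hst : s = t
    · exact hst
    · exfalso
      have f1 : (s - t) * (s * t * (s + t) - 2) = 0 := by linear_combination h1
      have f2 : (s - t) * (2 * (s * t) ^ 2 - (s + t)) = 0 := by linear_combination h2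
      have hne : s - t ≠ 0 := sub_ne_zero.mpr hst
      have hA : s * t * (s + t) - 2 = 0 := (mul_eq_zero.mp f1).resolve_left hne
      have hB : 2 * (s * t) ^ 2 - (s + t) = 0 := (mul_eq_zero.mp f2).resolve_left hne
      have hp3 : (s * t) ^ 3 = 1 := by
        linear_combination (1 / 2 : ℂ) * hA + (s * t / 2) * hB
      have hsq : (s - t) ^ 2 = 0 := by
        linear_combination (-(s + t) - 2 * (s * t) ^ 2) * hB + 4 * s * t * hp3
      exact hne (pow_eq_zero_iff two_ne_zero |>.mp hsq)
  · refine ⟨Polynomial.nthRootsFinset 3 (1 : ℂ), ?_, ?_, ?_⟩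
    · exact (Complex.isPrimitiveRoot_exp 3 (by norm_num)).card_nthRootsFinset
    · intro t htS
      have ht3 : t ^ 3 = 1 := (Polynomial.mem_nthRootsFinset (by norm_num) (1 : ℂ)).mp htS
      have ht0 : t ≠ 0 := by
        intro h; rw [h] at ht3; simp at ht3
      refine ⟨ht0, ?_, ?_, ?_⟩
      · rw [deriv_rudolphPhi ht0, ht3]; simp
      · rw [deriv_rudolphPsi ht0, ht3]; simp
      · rw [iteratedDeriv_two_rudolphPhi ht0, ht3]
        norm_num
    · intro t ht0 hφ hψ
      rw [deriv_rudolphPhi ht0] at hφ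
      have ht3 : t ^ 3 = 1 := by
        have := (div_eq_zero_iff.mp hφ).resolve_right (pow_ne_zero 2 ht0)
        have h2 : t ^ 3 - 1 = 0 := by
          rcases mul_eq_zero.mp this with h | h
          · norm_num at h
          · exact h
        exact sub_eq_zero.mp h2
      exact (Polynomial.mem_nthRootsFinset (by norm_num) (1 : ℂ)).mpr ht3
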